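/- Let w, h ≥ 0 be integers and s = w + h. Let 𝒫 be the set of all monotone lattice paths from (0,0) to (w,h), and for U, V ∈ 𝒫 let |U ∩ V| denote the number of lattice points visited by both U and V. Then 2 · Σ_{U ∈ 𝒫} Σ_{V ∈ 𝒫} |U ∩ V| = C(2s+2, 2w+1). -/
import Mathlib

/-- We encode a monotone lattice path from `(0,0)` to `(w,h)` by its sequence
of steps: a function `f : Fin (w+h) → Bool`, where `true` means an East step
and `false` means a North step, with exactly `w` East steps. -/
def pathsFrom0 (w h : ℕ) : Finset (Fin (w + h) → Bool) :=
  Finset.univ.filter fun f => (Finset.univ.filter fun i => f i = true).card = w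

/-- The lattice point reached after the first `t` steps of the path `f`. -/
def pathPos (w h : ℕ) (f : Fin (w + h) → Bool) (t : ℕ) : ℕ × ℕ :=
  ((Finset.univ.filter fun i : Fin (w + h) => (i : ℕ) < t ∧ f i = true).card,
   (Finset.univ.filter fun i : Fin (w + h) => (i : ℕ) < t ∧ f i = false).card)

/-- The set of lattice points visited by the path `f`. -/
def pathPoints (w h : ℕ) (f : Fin (w + h) → Bool) : Finset (ℕ × ℕ) :=
  (Finset.range (w + h + 1)).image (pathPos w h f)

/-- `|U ∩ V|`: the number of lattice points visited by both paths. -/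
def interCount (w h : ℕ) (f g : Fin (w + h) → Bool) : ℕ :=
  (pathPoints w h f ∩ pathPoints w h g).card


open Finset

namespace FMAux

/-- Binomial coefficient with integer lower index (zero when negative). -/
def ch (n : ℕ) (m : ℤ) : ℕ := if 0 ≤ m then n.choose m.toNat else 0

lemma ch_coe (n k : ℕ) : ch n (k : ℤ) = n.choose k := by
  simp [ch]

lemma ch_neg {n : ℕ} {m : ℤ} (h : m < 0) : ch n m = 0 := by
  simp [ch, not_le.2 h]

lemma ch_zero_of_lt {n : ℕ} {m : ℤ} (h : (n : ℤ) < m) : ch n m = 0 := by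
  rcases le_or_gt 0 m with h0 | h0
  · simp only [ch, if_pos h0]
    exact Nat.choose_eq_zero_of_lt (by omega)
  · exact ch_neg h0

lemma ch_pascal (n : ℕ) (m : ℤ) : ch (n + 1) m = ch n m + ch n (m - 1) := by
  rcases lt_trichotomy m 0 with h | h | h
  · rw [ch_neg h, ch_neg h, ch_neg (by omega)]
  · subst h
    simp [ch]
  · have h1 : 0 ≤ m := le_of_lt h
    have h2 : 0 ≤ m - 1 := by omega
    have h3 : m.toNat = (m - 1).toNat + 1 := by omega
    simp only [ch, if_pos h1, if_pos h2, h3]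
    rw [Nat.choose_succ_succ]
    simp [Nat.succ_eq_add_one]
    omega

lemma ch_zero_n (m : ℤ) : ch 0 m = if m = 0 then 1 else 0 := by
  rcases lt_trichotomy m 0 with h | h | h
  · rw [ch_neg h, if_neg (by omega)]
  · subst h; simp [ch]
  · rw [ch_zero_of_lt (by omega), if_neg (by omega)]

lemma ch_one (m : ℤ) : ch 1 m = if m = 0 ∨ m = 1 then 1 else 0 := by
  rw [show (1:ℕ) = 0 + 1 from rfl, ch_pascal, ch_zero_n, ch_zero_n]
  split_ifs <;> omega

def Ssum (s : ℕ) (a b : ℤ) : ℕ :=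
  ∑ t ∈ range (s + 1), ∑ k ∈ range (s + 1),
    ch t k ^ 2 * (ch (s - t) (a - k) * ch (s - t) (b - k))

def Rf (s : ℕ) (a b : ℤ) (j : ℕ) : ℕ :=
  if (j : ℤ) ≤ a ∧ (j : ℤ) ≤ b then ch (s + 1) j * ch (s + 1) (a + b + 1 - j) else 0

def Rsum (s : ℕ) (a b : ℤ) : ℕ := ∑ j ∈ range (s + 2), Rf s a b j


lemma ch_big {n N : ℕ} (h : n < N) : ch n ((N : ℕ) : ℤ) = 0 :=
  ch_zero_of_lt (by exact_mod_cast h)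

/-- Sum against a `ch 0` double diagonal. -/
lemma diag_sum (n N : ℕ) (hN : n < N) (a b : ℤ) :
    ∑ k ∈ Finset.range N, ch n k ^ 2 * (ch 0 (a - k) * ch 0 (b - k)) =
      if a = b then ch n a ^ 2 else 0 := by
  rcases eq_or_ne a b with hab | hab
  · subst hab
    rw [if_pos rfl]
    rcases le_or_gt 0 a with h0 | h0
    · lift a to ℕ using h0 with m
      rw [Finset.sum_eq_single m]
      · simp [ch_zero_n]
      · intro k _ hk
        have : (m : ℤ) - k ≠ 0 := by
          intro hc; apply hk; omega
        simp [ch_zero_n, this]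
      · intro hm
        have : N ≤ m := by simpa using hm
        have : ch n (m : ℤ) = 0 := ch_zero_of_lt (by exact_mod_cast lt_of_lt_of_le hN this)
        simp [this]
    · have hz : ch n a = 0 := ch_neg h0
      rw [hz]
      rw [Finset.sum_eq_zero]
      · ring
      · intro k _
        have : a - k < 0 := by omega
        simp [ch_neg this]
  · rw [if_neg hab, Finset.sum_eq_zero]
    intro k _
    rcases eq_or_ne (a - (k : ℤ)) 0 with h1 | h1
    · have h2 : b - (k : ℤ) ≠ 0 := by intro hc; apply hab; omega
      simp [ch_zero_n, h2]
    · simp [ch_zero_n, h1]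

/-- Sum against the diagonal marker in the `R`-side recurrence. -/
lemma diag_sum2 (n N : ℕ) (hN : n < N) (a b : ℤ) :
    ∑ j ∈ Finset.range N, (if (j : ℤ) = a ∧ a = b then ch n j * ch n (a + b - j) else 0) =
      if a = b then ch n a ^ 2 else 0 := by
  rcases eq_or_ne a b with hab | hab
  · subst hab
    rw [if_pos rfl]
    rcases le_or_gt 0 a with h0 | h0
    · lift a to ℕ using h0 with m
      rw [Finset.sum_eq_single m]
      · have : (m : ℤ) + m - m = (m : ℤ) := by ring
        simp [this, pow_two]
      · intro k _ hk
        rw [if_neg (by rintro ⟨h1, -⟩; exact hk (by exact_mod_cast h1))]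
      · intro hm
        have h1 : N ≤ m := by simpa using hm
        have : ch n (m : ℤ) = 0 := ch_zero_of_lt (by exact_mod_cast lt_of_lt_of_le hN h1)
        simp [this]
    · have hz : ch n a = 0 := ch_neg h0
      rw [hz, Finset.sum_eq_zero]
      · ring
      · intro k _
        rw [if_neg (by rintro ⟨h1, -⟩; omega)]
  · rw [if_neg hab, Finset.sum_eq_zero]
    intro k _
    simp [hab]

theorem key : ∀ s : ℕ, ∀ a b : ℤ, Ssum s a b = Rsum s a b := by
  intro s
  induction s with
  | zero =>
    intro a b
    have hS : Ssum 0 a b = ch 0 a * ch 0 b := by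
      simp [Ssum, Finset.sum_range_one, ch_zero_n]
    have hR : Rsum 0 a b = Rf 0 a b 0 + Rf 0 a b 1 := by
      simp [Rsum, Finset.sum_range_succ]
    have hR0 : Rf 0 a b 0 = if 0 ≤ a ∧ 0 ≤ b then ch 1 (a + b + 1) else 0 := by
      simp [Rf, ch_one]
    have hR1 : Rf 0 a b 1 = if 1 ≤ a ∧ 1 ≤ b then ch 1 (a + b) else 0 := by
      have : a + b + 1 - (1:ℤ) = a + b := by ring
      simp [Rf, ch_one, this]
    rw [hS, hR, hR0, hR1]
    rw [ch_zero_n, ch_zero_n, ch_one, ch_one]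
    split_ifs <;> omega
  | succ s ih =>
    intro a b
    -- LHS decomposition
    have hts : ∀ t ∈ Finset.range (s + 1), t ≤ s := by
      intro t ht; exact Nat.lt_succ_iff.mp (Finset.mem_range.mp ht)
    have hL : Ssum (s + 1) a b =
        (if a = b then ch (s + 1) a ^ 2 else 0) +
          (Ssum s a b + Ssum s (a - 1) b + (Ssum s a (b - 1) + Ssum s (a - 1) (b - 1))) := by
      rw [Ssum]
      rw [show s + 1 + 1 = (s + 1) + 1 from rfl]
      rw [Finset.sum_range_succ]
      have htop : ∑ k ∈ Finset.range (s + 1 + 1),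
          ch (s + 1) k ^ 2 * (ch (s + 1 - (s + 1)) (a - k) * ch (s + 1 - (s + 1)) (b - k)) =
          if a = b then ch (s + 1) a ^ 2 else 0 := by
        rw [show s + 1 - (s + 1) = 0 from by omega]
        exact diag_sum (s + 1) (s + 1 + 1) (by omega) a b
      rw [htop]
      have hbody : ∑ t ∈ Finset.range (s + 1), ∑ k ∈ Finset.range (s + 1 + 1),
          ch t k ^ 2 * (ch (s + 1 - t) (a - k) * ch (s + 1 - t) (b - k)) =
          Ssum s a b + Ssum s (a - 1) b + (Ssum s a (b - 1) + Ssum s (a - 1) (b - 1)) := by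
        simp only [Ssum]
        rw [← Finset.sum_add_distrib, ← Finset.sum_add_distrib, ← Finset.sum_add_distrib]
        apply Finset.sum_congr rfl
        intro t ht
        have ht' : t ≤ s := hts t ht
        have hsub : s + 1 - t = (s - t) + 1 := by omega
        rw [hsub, Finset.sum_range_succ]
        have hz : ch t ((s + 1 : ℕ) : ℤ) = 0 := ch_big (by omega)
        rw [hz]
        simp only [ne_eq, zero_pow (by norm_num : 2 ≠ 0), zero_mul, add_zero]
        rw [← Finset.sum_add_distrib, ← Finset.sum_add_distrib, ← Finset.sum_add_distrib]
        apply Finset.sum_congr rfl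
        intro k _
        rw [ch_pascal (s - t) (a - k), ch_pascal (s - t) (b - k)]
        have e1 : a - (k : ℤ) - 1 = (a - 1) - k := by ring
        have e2 : b - (k : ℤ) - 1 = (b - 1) - k := by ring
        rw [e1, e2]
        ring
      rw [hbody]
      ring
    -- RHS decomposition
    have hR : Rsum (s + 1) a b =
        (if a = b then ch (s + 1) a ^ 2 else 0) +
          (Rsum s a b + Rsum s (a - 1) b + (Rsum s a (b - 1) + Rsum s (a - 1) (b - 1))) := by
      have hexp : Rsum (s + 1) a b =
          (∑ j ∈ Finset.range (s + 3), (if (j : ℤ) ≤ a ∧ (j : ℤ) ≤ b then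
              ch (s + 1) j * ch (s + 1) (a + b + 1 - j) else 0)) +
          ((∑ j ∈ Finset.range (s + 3), (if (j : ℤ) ≤ a ∧ (j : ℤ) ≤ b then
              ch (s + 1) j * ch (s + 1) (a + b - j) else 0)) +
          ((∑ j ∈ Finset.range (s + 3), (if (j : ℤ) ≤ a ∧ (j : ℤ) ≤ b then
              ch (s + 1) ((j : ℤ) - 1) * ch (s + 1) (a + b + 1 - j) else 0)) +
          (∑ j ∈ Finset.range (s + 3), (if (j : ℤ) ≤ a ∧ (j : ℤ) ≤ b then
              ch (s + 1) ((j : ℤ) - 1) * ch (s + 1) (a + b - j) else 0)))) := by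
        rw [Rsum, show s + 1 + 2 = s + 3 from rfl]
        rw [← Finset.sum_add_distrib, ← Finset.sum_add_distrib, ← Finset.sum_add_distrib]
        apply Finset.sum_congr rfl
        intro j _
        rw [Rf, show s + 1 + 1 = (s + 1) + 1 from rfl, ch_pascal (s + 1) (j : ℤ),
          ch_pascal (s + 1) (a + b + 1 - j)]
        have e3 : a + b + 1 - (j : ℤ) - 1 = a + b - j := by ring
        rw [e3]
        split_ifs
        · ring
        · rfl
      -- term A
      have hA : (∑ j ∈ Finset.range (s + 3), (if (j : ℤ) ≤ a ∧ (j : ℤ) ≤ b then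
          ch (s + 1) j * ch (s + 1) (a + b + 1 - j) else 0)) = Rsum s a b := by
        rw [show s + 3 = (s + 2) + 1 from rfl, Finset.sum_range_succ, Rsum]
        have hz : ch (s + 1) ((s + 2 : ℕ) : ℤ) = 0 := ch_big (by omega)
        simp only [Rf, hz, zero_mul, ite_self, add_zero]
      -- term E (both shifted)
      have hE : (∑ j ∈ Finset.range (s + 3), (if (j : ℤ) ≤ a ∧ (j : ℤ) ≤ b then
          ch (s + 1) ((j : ℤ) - 1) * ch (s + 1) (a + b - j) else 0)) =
          Rsum s (a - 1) (b - 1) := by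
        rw [show s + 3 = (s + 2) + 1 from rfl, Finset.sum_range_succ']
        have hz0 : ch (s + 1) ((0 : ℤ) - 1) = 0 := ch_neg (by omega)
        simp only [Nat.cast_zero, hz0, zero_mul, ite_self, add_zero]
        rw [Rsum]
        apply Finset.sum_congr rfl
        intro j _
        rw [Rf]
        have g1 : (((j + 1 : ℕ) : ℤ) ≤ a ∧ ((j + 1 : ℕ) : ℤ) ≤ b) ↔
            ((j : ℤ) ≤ a - 1 ∧ (j : ℤ) ≤ b - 1) := by
          push_cast; omega
        have e4 : ((j + 1 : ℕ) : ℤ) - 1 = (j : ℤ) := by push_cast; ring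
        have e5 : a + b - ((j + 1 : ℕ) : ℤ) = (a - 1) + (b - 1) + 1 - j := by push_cast; ring
        rw [e4, e5]
        split_ifs with h1 h2 h2
        · rfl
        · exact absurd (g1.mp h1) h2
        · exact absurd (g1.mpr h2) h1
        · rfl
      -- terms B + D
      have hBD : (∑ j ∈ Finset.range (s + 3), (if (j : ℤ) ≤ a ∧ (j : ℤ) ≤ b then
          ch (s + 1) j * ch (s + 1) (a + b - j) else 0)) +
          (∑ j ∈ Finset.range (s + 3), (if (j : ℤ) ≤ a ∧ (j : ℤ) ≤ b then
          ch (s + 1) ((j : ℤ) - 1) * ch (s + 1) (a + b + 1 - j) else 0)) =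
          (if a = b then ch (s + 1) a ^ 2 else 0) + (Rsum s (a - 1) b + Rsum s a (b - 1)) := by
        -- shift the D term
        have hD : (∑ j ∈ Finset.range (s + 3), (if (j : ℤ) ≤ a ∧ (j : ℤ) ≤ b then
            ch (s + 1) ((j : ℤ) - 1) * ch (s + 1) (a + b + 1 - j) else 0)) =
            ∑ j ∈ Finset.range (s + 2), (if (j : ℤ) ≤ a - 1 ∧ (j : ℤ) ≤ b - 1 then
            ch (s + 1) j * ch (s + 1) (a + b - j) else 0) := by
          rw [show s + 3 = (s + 2) + 1 from rfl, Finset.sum_range_succ']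
          have hz0 : ch (s + 1) ((0 : ℤ) - 1) = 0 := ch_neg (by omega)
          simp only [Nat.cast_zero, hz0, zero_mul, ite_self, add_zero]
          apply Finset.sum_congr rfl
          intro j _
          have e4 : ((j + 1 : ℕ) : ℤ) - 1 = (j : ℤ) := by push_cast; ring
          have e5 : a + b + 1 - ((j + 1 : ℕ) : ℤ) = a + b - j := by push_cast; ring
          rw [e4, e5]
          have g1 : (((j + 1 : ℕ) : ℤ) ≤ a ∧ ((j + 1 : ℕ) : ℤ) ≤ b) ↔
              ((j : ℤ) ≤ a - 1 ∧ (j : ℤ) ≤ b - 1) := by push_cast; omega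
          split_ifs with h1 h2 h2
          · rfl
          · exact absurd (g1.mp h1) h2
          · exact absurd (g1.mpr h2) h1
          · rfl
        -- shrink the B term
        have hB : (∑ j ∈ Finset.range (s + 3), (if (j : ℤ) ≤ a ∧ (j : ℤ) ≤ b then
            ch (s + 1) j * ch (s + 1) (a + b - j) else 0)) =
            ∑ j ∈ Finset.range (s + 2), (if (j : ℤ) ≤ a ∧ (j : ℤ) ≤ b then
            ch (s + 1) j * ch (s + 1) (a + b - j) else 0) := by
          rw [show s + 3 = (s + 2) + 1 from rfl, Finset.sum_range_succ]
          have hz : ch (s + 1) ((s + 2 : ℕ) : ℤ) = 0 := ch_big (by omega)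
          simp only [hz, zero_mul, ite_self, add_zero]
        rw [hD, hB, ← Finset.sum_add_distrib]
        have hdiag := diag_sum2 (s + 1) (s + 2) (by omega) a b
        rw [Rsum, Rsum, ← hdiag, ← Finset.sum_add_distrib, ← Finset.sum_add_distrib]
        apply Finset.sum_congr rfl
        intro j _
        simp only [Rf]
        have e6 : (a - 1) + b + 1 - (j : ℤ) = a + b - j := by ring
        have e7 : a + (b - 1) + 1 - (j : ℤ) = a + b - j := by ring
        rw [e6, e7]
        set X := ch (s + 1) (j : ℤ) * ch (s + 1) (a + b - (j : ℤ)) with hX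
        have hXa : ((j : ℤ) = a ∧ a = b) → ch (s + 1) j * ch (s + 1) (a + b - (j : ℤ)) = X := by
          intro _; rw [hX]
        split_ifs with h1 h2 h3 h4 h5 <;> omega
      rw [hexp, hA, hE]
      linarith [hBD]
    rw [hL, hR, ih a b, ih (a - 1) b, ih a (b - 1), ih (a - 1) (b - 1)]


/-- The `ℕ`-valued form of the central double sum. -/
def Tsum (s w : ℕ) : ℕ :=
  ∑ t ∈ Finset.range (s + 1), ∑ k ∈ Finset.range (w + 1),
    (Nat.choose t k * Nat.choose (s - t) (w - k)) ^ 2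

lemma Tsum_eq_Ssum (s w : ℕ) : Tsum s w = Ssum s (w : ℤ) (w : ℤ) := by
  rw [Tsum, Ssum]
  apply Finset.sum_congr rfl
  intro t ht
  have ht' : t ≤ s := Nat.lt_succ_iff.mp (Finset.mem_range.mp ht)
  have hT : ∑ k ∈ Finset.range (w + 1), (Nat.choose t k * Nat.choose (s - t) (w - k)) ^ 2
      = ∑ k ∈ Finset.range (min s w + 1), (Nat.choose t k * Nat.choose (s - t) (w - k)) ^ 2 := by
    refine (Finset.sum_subset (Finset.range_subset_range.mpr (by omega)) ?_).symm
    intro k hk hk2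
    have h1 : k < w + 1 := Finset.mem_range.mp hk
    have h2 : ¬ k < min s w + 1 := fun h => hk2 (Finset.mem_range.mpr h)
    have : Nat.choose t k = 0 := Nat.choose_eq_zero_of_lt (by omega)
    simp [this]
  have hS : ∑ k ∈ Finset.range (s + 1),
        ch t k ^ 2 * (ch (s - t) ((w : ℤ) - k) * ch (s - t) ((w : ℤ) - k))
      = ∑ k ∈ Finset.range (min s w + 1),
        ch t k ^ 2 * (ch (s - t) ((w : ℤ) - k) * ch (s - t) ((w : ℤ) - k)) := by
    refine (Finset.sum_subset (Finset.range_subset_range.mpr (by omega)) ?_).symm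
    intro k hk hk2
    have h1 : k < s + 1 := Finset.mem_range.mp hk
    have h2 : ¬ k < min s w + 1 := fun h => hk2 (Finset.mem_range.mpr h)
    have : ch (s - t) ((w : ℤ) - k) = 0 := ch_neg (by omega)
    simp [this]
  rw [hT, hS]
  apply Finset.sum_congr rfl
  intro k hk
  have hkw : k ≤ w := by
    have := Finset.mem_range.mp hk; omega
  have e1 : (w : ℤ) - k = ((w - k : ℕ) : ℤ) := by omega
  rw [e1, ch_coe, ch_coe]
  ring

lemma two_Rsum (s w : ℕ) : 2 * Rsum s (w : ℤ) (w : ℤ) = Nat.choose (2 * s + 2) (2 * w + 1) := by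
  have hR : Rsum s (w : ℤ) (w : ℤ)
      = ∑ j ∈ Finset.range (w + 1), Nat.choose (s + 1) j * Nat.choose (s + 1) (2 * w + 1 - j) := by
    have h1 : Rsum s (w : ℤ) (w : ℤ) = ∑ j ∈ Finset.range (min (s + 1) w + 1),
        Rf s (w : ℤ) (w : ℤ) j := by
      rw [Rsum]
      refine (Finset.sum_subset (Finset.range_subset_range.mpr (by omega)) ?_).symm
      intro j hj hj2
      have h1 : j < s + 2 := Finset.mem_range.mp hj
      have h2 : ¬ j < min (s + 1) w + 1 := fun h => hj2 (Finset.mem_range.mpr h)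
      rw [Rf, if_neg]
      rintro ⟨hja, -⟩
      omega
    have h2 : ∑ j ∈ Finset.range (w + 1), Nat.choose (s + 1) j * Nat.choose (s + 1) (2 * w + 1 - j)
        = ∑ j ∈ Finset.range (min (s + 1) w + 1),
            Nat.choose (s + 1) j * Nat.choose (s + 1) (2 * w + 1 - j) := by
      refine (Finset.sum_subset (Finset.range_subset_range.mpr (by omega)) ?_).symm
      intro j hj hj2
      have h1 : j < w + 1 := Finset.mem_range.mp hj
      have h2 : ¬ j < min (s + 1) w + 1 := fun h => hj2 (Finset.mem_range.mpr h)
      have : Nat.choose (s + 1) j = 0 := Nat.choose_eq_zero_of_lt (by omega)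
      simp [this]
    rw [h1, h2]
    apply Finset.sum_congr rfl
    intro j hj
    have hjw : j ≤ w := by
      have := Finset.mem_range.mp hj; omega
    rw [Rf, if_pos (by constructor <;> exact_mod_cast Nat.cast_le.mpr hjw)]
    have e1 : (w : ℤ) + w + 1 - j = ((2 * w + 1 - j : ℕ) : ℤ) := by omega
    rw [e1, ch_coe, ch_coe]
  -- Vandermonde and reflection
  have hv : Nat.choose (2 * s + 2) (2 * w + 1)
      = ∑ j ∈ Finset.range (2 * w + 2), Nat.choose (s + 1) j * Nat.choose (s + 1) (2 * w + 1 - j) := by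
    rw [show 2 * s + 2 = (s + 1) + (s + 1) by ring, Nat.add_choose_eq]
    exact Finset.Nat.sum_antidiagonal_eq_sum_range_succ_mk _ (2 * w + 1)
  have hsplit : ∑ j ∈ Finset.range (2 * w + 2), Nat.choose (s + 1) j * Nat.choose (s + 1) (2 * w + 1 - j)
      = (∑ j ∈ Finset.range (w + 1), Nat.choose (s + 1) j * Nat.choose (s + 1) (2 * w + 1 - j))
      + ∑ j ∈ Finset.range (w + 1), Nat.choose (s + 1) ((w + 1) + j) * Nat.choose (s + 1) (2 * w + 1 - ((w + 1) + j)) := by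
    rw [show 2 * w + 2 = (w + 1) + (w + 1) by ring, Finset.range_add, Finset.sum_union, Finset.sum_map]
    · simp [addLeftEmbedding_apply]
    · rw [Finset.disjoint_left]
      intro a ha hb
      obtain ⟨b, hb', rfl⟩ := Finset.mem_map.mp hb
      have h1 := Finset.mem_range.mp ha
      have h2 := Finset.mem_range.mp hb'
      simp only [addLeftEmbedding_apply] at h1
      omega
  have hrefl : ∑ j ∈ Finset.range (w + 1),
        Nat.choose (s + 1) ((w + 1) + j) * Nat.choose (s + 1) (2 * w + 1 - ((w + 1) + j))
      = ∑ j ∈ Finset.range (w + 1), Nat.choose (s + 1) j * Nat.choose (s + 1) (2 * w + 1 - j) := by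
    rw [← Finset.sum_range_reflect (fun j => Nat.choose (s + 1) j * Nat.choose (s + 1) (2 * w + 1 - j)) (w + 1)]
    apply Finset.sum_congr rfl
    intro j hj
    have hjw : j ≤ w := by
      have := Finset.mem_range.mp hj; omega
    have e1 : w + 1 - 1 - j = w - j := by omega
    have e2 : 2 * w + 1 - ((w + 1) + j) = w - j := by omega
    have e3 : 2 * w + 1 - (w - j) = (w + 1) + j := by omega
    rw [e1, e2, e3]
    ring
  rw [hR, hv, hsplit, hrefl]
  ring

end FMAux

section Comb

open Finset FMAux

variable {w h : ℕ}

/-- Number of East steps among the first `t` steps. -/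
def Ecnt (n : ℕ) (f : Fin n → Bool) (t : ℕ) : ℕ :=
  (Finset.univ.filter fun i : Fin n => (i : ℕ) < t ∧ f i = true).card

lemma card_filter_lt (n t : ℕ) :
    ((Finset.univ : Finset (Fin n)).filter fun i : Fin n => (i : ℕ) < t).card = min t n := by
  have h : ((Finset.univ : Finset (Fin n)).filter fun i : Fin n => (i : ℕ) < t)
      = ((Finset.range (min t n)).attachFin (fun m hm => by
          have := Finset.mem_range.mp hm; omega)) := by
    ext i
    simp only [Finset.mem_filter, Finset.mem_univ, true_and, Finset.mem_attachFin,
      Finset.mem_range]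
    omega
  rw [h, Finset.card_attachFin, Finset.card_range]

lemma filter_split (n : ℕ) (f : Fin n → Bool) (t : ℕ) :
    Ecnt n f t + (Finset.univ.filter fun i : Fin n => (i : ℕ) < t ∧ f i = false).card
      = min t n := by
  rw [← card_filter_lt n t, Ecnt]
  have e1 : (Finset.univ.filter fun i : Fin n => (i : ℕ) < t ∧ f i = true)
      = (Finset.univ.filter fun i : Fin n => (i : ℕ) < t).filter (fun i => f i = true) := by
    rw [Finset.filter_filter]
  have e2 : (Finset.univ.filter fun i : Fin n => (i : ℕ) < t ∧ f i = false)
      = (Finset.univ.filter fun i : Fin n => (i : ℕ) < t).filter (fun i => ¬ (f i = true)) := by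
    rw [Finset.filter_filter]
    apply Finset.filter_congr
    intro i _
    simp [Bool.not_eq_true]
  rw [e1, e2]
  exact Finset.card_filter_add_card_filter_not _

lemma pathPos_fst (f : Fin (w + h) → Bool) (t : ℕ) :
    (pathPos w h f t).1 = Ecnt (w + h) f t := rfl

lemma pathPos_sum (f : Fin (w + h) → Bool) {t : ℕ} (ht : t ≤ w + h) :
    (pathPos w h f t).1 + (pathPos w h f t).2 = t := by
  have := filter_split (w + h) f t
  rw [pathPos]
  simp only []
  rw [show (min t (w + h)) = t from by omega] at this
  exact this

lemma pathPos_injOn (f : Fin (w + h) → Bool) :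
    ∀ t ∈ Finset.range (w + h + 1), ∀ t' ∈ Finset.range (w + h + 1),
      pathPos w h f t = pathPos w h f t' → t = t' := by
  intro t ht t' ht' heq
  have h1 := pathPos_sum f (t := t) (by have := Finset.mem_range.mp ht; omega)
  have h2 := pathPos_sum f (t := t') (by have := Finset.mem_range.mp ht'; omega)
  rw [heq] at h1
  omega

lemma interCount_eq (f g : Fin (w + h) → Bool) :
    interCount w h f g =
      ((Finset.range (w + h + 1)).filter fun t =>
        Ecnt (w + h) f t = Ecnt (w + h) g t).card := by
  have hset : pathPoints w h f ∩ pathPoints w h g =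
      ((Finset.range (w + h + 1)).filter fun t => pathPos w h f t = pathPos w h g t).image
        (pathPos w h f) := by
    ext p
    constructor
    · intro hp
      obtain ⟨hp1, hp2⟩ := Finset.mem_inter.mp hp
      obtain ⟨t, ht, rfl⟩ := Finset.mem_image.mp hp1
      obtain ⟨t', ht', heq⟩ := Finset.mem_image.mp hp2
      have hsum1 := pathPos_sum f (t := t) (by have := Finset.mem_range.mp ht; omega)
      have hsum2 := pathPos_sum g (t := t') (by have := Finset.mem_range.mp ht'; omega)
      have htt : t = t' := by rw [heq] at hsum2; omega
      subst htt
      exact Finset.mem_image.mpr ⟨t, Finset.mem_filter.mpr ⟨ht, heq.symm⟩, rfl⟩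
    · intro hp
      obtain ⟨t, ht, rfl⟩ := Finset.mem_image.mp hp
      obtain ⟨ht1, ht2⟩ := Finset.mem_filter.mp ht
      refine Finset.mem_inter.mpr ⟨Finset.mem_image.mpr ⟨t, ht1, rfl⟩, ?_⟩
      exact Finset.mem_image.mpr ⟨t, ht1, ht2.symm⟩
  rw [interCount, hset, Finset.card_image_of_injOn]
  · congr 1
    apply Finset.filter_congr
    intro t ht
    have hts := Finset.mem_range.mp ht
    constructor
    · intro hpq
      simpa [pathPos_fst] using congrArg Prod.fst hpq
    · intro hE
      have h1 := pathPos_sum f (t := t) (by omega)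
      have h2 := pathPos_sum g (t := t) (by omega)
      have hfst : (pathPos w h f t).1 = (pathPos w h g t).1 := by
        rw [pathPos_fst, pathPos_fst]; exact hE
      have hsnd : (pathPos w h f t).2 = (pathPos w h g t).2 := by omega
      exact Prod.ext hfst hsnd
  · intro t ht t' ht' heq
    exact pathPos_injOn f t (Finset.mem_filter.mp ht).1 t' (Finset.mem_filter.mp ht').1 heq

lemma fiber_card (t k : ℕ) (ht : t ≤ w + h) (hk : k ≤ w) :
    ((pathsFrom0 w h).filter fun f => Ecnt (w + h) f t = k).card
      = Nat.choose t k * Nat.choose (w + h - t) (w - k) := by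
  set A : Finset (Fin (w + h)) := Finset.univ.filter (fun i : Fin (w + h) => (i : ℕ) < t) with hA
  set B : Finset (Fin (w + h)) := Finset.univ.filter (fun i : Fin (w + h) => ¬ (i : ℕ) < t) with hB
  have hcardA : A.card = t := by
    rw [hA, card_filter_lt]; omega
  have hcardB : B.card = w + h - t := by
    have := Finset.card_filter_add_card_filter_not
      (s := (Finset.univ : Finset (Fin (w + h)))) (p := fun i : Fin (w + h) => (i : ℕ) < t)
    rw [← hA] at this
    have hu : (Finset.univ : Finset (Fin (w + h))).card = w + h := by simp
    have hBeq : B.card = w + h - A.card := by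
      rw [hB]
      omega
    omega
  -- the splitting bijection
  have hkey : ((pathsFrom0 w h).filter fun f => Ecnt (w + h) f t = k).card
      = (A.powersetCard k ×ˢ B.powersetCard (w - k)).card := by
    apply Finset.card_bij' (i := fun f _ =>
        (Finset.univ.filter fun x : Fin (w + h) => (x : ℕ) < t ∧ f x = true,
         Finset.univ.filter fun x : Fin (w + h) => ¬ (x : ℕ) < t ∧ f x = true))
      (j := fun p _ => fun x : Fin (w + h) => decide (x ∈ p.1 ∪ p.2))
    -- hi : image lands in target
    · intro f hf
      obtain ⟨hfP, hfE⟩ := Finset.mem_filter.mp hf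
      have hw : (Finset.univ.filter fun i : Fin (w + h) => f i = true).card = w := by
        simpa [pathsFrom0] using hfP
      have hsplit : (Finset.univ.filter fun x : Fin (w + h) => (x : ℕ) < t ∧ f x = true).card
          + (Finset.univ.filter fun x : Fin (w + h) => ¬ (x : ℕ) < t ∧ f x = true).card
          = (Finset.univ.filter fun i : Fin (w + h) => f i = true).card := by
        have e1 : (Finset.univ.filter fun x : Fin (w + h) => (x : ℕ) < t ∧ f x = true)
            = (Finset.univ.filter fun i : Fin (w + h) => f i = true).filter
                (fun x : Fin (w + h) => (x : ℕ) < t) := by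
          ext x; simp only [Finset.mem_filter, Finset.mem_univ, true_and]; tauto
        have e2 : (Finset.univ.filter fun x : Fin (w + h) => ¬ (x : ℕ) < t ∧ f x = true)
            = (Finset.univ.filter fun i : Fin (w + h) => f i = true).filter
                (fun x : Fin (w + h) => ¬ (x : ℕ) < t) := by
          ext x; simp only [Finset.mem_filter, Finset.mem_univ, true_and]; tauto
        rw [e1, e2]
        exact Finset.card_filter_add_card_filter_not _
      rw [Finset.mem_product]
      constructor
      · rw [Finset.mem_powersetCard]
        constructor
        · intro x hx
          rw [hA, Finset.mem_filter]
          exact ⟨Finset.mem_univ x, (Finset.mem_filter.mp hx).2.1⟩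
        · exact hfE
      · rw [Finset.mem_powersetCard]
        constructor
        · intro x hx
          rw [hB, Finset.mem_filter]
          exact ⟨Finset.mem_univ x, (Finset.mem_filter.mp hx).2.1⟩
        · have hEk : Ecnt (w + h) f t = k := hfE
          rw [Ecnt] at hEk
          dsimp only
          omega
    -- hj : inverse lands in source
    · intro p hp
      rw [Finset.mem_product] at hp
      obtain ⟨hp1, hp2⟩ := hp
      rw [Finset.mem_powersetCard] at hp1 hp2
      obtain ⟨hp1s, hp1c⟩ := hp1
      obtain ⟨hp2s, hp2c⟩ := hp2
      have hmem1 : ∀ x ∈ p.1, (x : ℕ) < t := by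
        intro x hx
        have := hp1s hx
        rw [hA, Finset.mem_filter] at this
        exact this.2
      have hmem2 : ∀ x ∈ p.2, ¬ (x : ℕ) < t := by
        intro x hx
        have := hp2s hx
        rw [hB, Finset.mem_filter] at this
        exact this.2
      have hdis : Disjoint p.1 p.2 := by
        rw [Finset.disjoint_left]
        intro x hx1 hx2
        exact hmem2 x hx2 (hmem1 x hx1)
      have hfilt : (Finset.univ.filter fun i : Fin (w + h) =>
          (decide (i ∈ p.1 ∪ p.2)) = true) = p.1 ∪ p.2 := by
        ext x
        simp
      have hfilt2 : (Finset.univ.filter fun i : Fin (w + h) =>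
          (i : ℕ) < t ∧ (decide (i ∈ p.1 ∪ p.2)) = true) = p.1 := by
        ext x
        simp only [Finset.mem_filter, Finset.mem_univ, true_and, decide_eq_true_eq,
          Finset.mem_union]
        constructor
        · rintro ⟨hxt, hx12⟩
          rcases hx12 with hx1 | hx2
          · exact hx1
          · exact absurd hxt (hmem2 x hx2)
        · intro hx1
          exact ⟨hmem1 x hx1, Or.inl hx1⟩
      rw [Finset.mem_filter]
      constructor
      · rw [pathsFrom0, Finset.mem_filter]
        refine ⟨Finset.mem_univ _, ?_⟩
        rw [hfilt, Finset.card_union_of_disjoint hdis, hp1c, hp2c]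
        omega
      · rw [Ecnt]
        rw [hfilt2, hp1c]
    -- left inverse
    · intro f hf
      funext x
      by_cases hx : f x = true
      · simp [hx] <;> omega
      · simp only [Bool.not_eq_true] at hx
        simp [hx]
    -- right inverse
    · intro p hp
      rw [Finset.mem_product] at hp
      obtain ⟨hp1, hp2⟩ := hp
      rw [Finset.mem_powersetCard] at hp1 hp2
      have hmem1 : ∀ x ∈ p.1, (x : ℕ) < t := by
        intro x hx
        have := hp1.1 hx
        rw [hA, Finset.mem_filter] at this
        exact this.2
      have hmem2 : ∀ x ∈ p.2, ¬ (x : ℕ) < t := by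
        intro x hx
        have := hp2.1 hx
        rw [hB, Finset.mem_filter] at this
        exact this.2
      have e1 : (Finset.univ.filter fun x : Fin (w + h) =>
          (x : ℕ) < t ∧ (decide (x ∈ p.1 ∪ p.2)) = true) = p.1 := by
        ext x
        simp only [Finset.mem_filter, Finset.mem_univ, true_and, decide_eq_true_eq,
          Finset.mem_union]
        constructor
        · rintro ⟨hxt, hx12⟩
          rcases hx12 with hx1 | hx2
          · exact hx1
          · exact absurd hxt (hmem2 x hx2)
        · intro hx1
          exact ⟨hmem1 x hx1, Or.inl hx1⟩
      have e2 : (Finset.univ.filter fun x : Fin (w + h) =>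
          ¬ (x : ℕ) < t ∧ (decide (x ∈ p.1 ∪ p.2)) = true) = p.2 := by
        ext x
        simp only [Finset.mem_filter, Finset.mem_univ, true_and, decide_eq_true_eq,
          Finset.mem_union]
        constructor
        · rintro ⟨hxt, hx12⟩
          rcases hx12 with hx1 | hx2
          · exact absurd (hmem1 x hx1) hxt
          · exact hx2
        · intro hx2
          exact ⟨hmem2 x hx2, Or.inr hx2⟩
      exact Prod.ext e1 e2
  rw [hkey, Finset.card_product, Finset.card_powersetCard, Finset.card_powersetCard,
    hcardA, hcardB]

lemma Ecnt_le_w (f : Fin (w + h) → Bool) (hf : f ∈ pathsFrom0 w h) (t : ℕ) :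
    Ecnt (w + h) f t ≤ w := by
  have hw : (Finset.univ.filter fun i : Fin (w + h) => f i = true).card = w := by
    simpa [pathsFrom0] using hf
  have hsub : (Finset.univ.filter fun i : Fin (w + h) => (i : ℕ) < t ∧ f i = true)
      ⊆ (Finset.univ.filter fun i : Fin (w + h) => f i = true) := by
    intro x hx
    rw [Finset.mem_filter] at *
    exact ⟨hx.1, hx.2.2⟩
  have hle := Finset.card_le_card hsub
  rw [Ecnt]
  omega

lemma main_sum : ∑ U ∈ pathsFrom0 w h, ∑ V ∈ pathsFrom0 w h, interCount w h U V
    = Tsum (w + h) w := by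
  set n := w + h with hn
  set P := pathsFrom0 w h with hP
  have h1 : ∀ U V, interCount w h U V
      = ∑ t ∈ Finset.range (n + 1), if Ecnt n U t = Ecnt n V t then 1 else 0 := by
    intro U V
    rw [interCount_eq, Finset.card_filter]
  calc ∑ U ∈ P, ∑ V ∈ P, interCount w h U V
      = ∑ U ∈ P, ∑ V ∈ P, ∑ t ∈ Finset.range (n + 1),
          (if Ecnt n U t = Ecnt n V t then 1 else 0) := by
        apply Finset.sum_congr rfl; intro U _
        apply Finset.sum_congr rfl; intro V _
        exact h1 U V
    _ = ∑ t ∈ Finset.range (n + 1), ∑ U ∈ P, ∑ V ∈ P,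
          (if Ecnt n U t = Ecnt n V t then 1 else 0) := by
        trans (∑ U ∈ P, ∑ t ∈ Finset.range (n + 1), ∑ V ∈ P,
            (if Ecnt n U t = Ecnt n V t then 1 else 0))
        · exact Finset.sum_congr rfl (fun U _ => Finset.sum_comm)
        · exact Finset.sum_comm
    _ = ∑ t ∈ Finset.range (n + 1), ∑ k ∈ Finset.range (w + 1),
          ((P.filter fun f => Ecnt n f t = k).card) ^ 2 := by
        apply Finset.sum_congr rfl; intro t _
        have h2 : ∀ U ∈ P, (∑ V ∈ P, if Ecnt n U t = Ecnt n V t then 1 else 0)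
            = (P.filter fun V => Ecnt n V t = Ecnt n U t).card := by
          intro U _
          rw [Finset.card_filter]
          apply Finset.sum_congr rfl; intro V _
          by_cases hE : Ecnt n U t = Ecnt n V t
          · rw [if_pos hE, if_pos hE.symm]
          · rw [if_neg hE, if_neg (fun hc => hE hc.symm)]
        trans (∑ U ∈ P, (P.filter fun V => Ecnt n V t = Ecnt n U t).card)
        · exact Finset.sum_congr rfl h2
        rw [← Finset.sum_fiberwise_of_maps_to (g := fun U => Ecnt n U t)
          (t := Finset.range (w + 1)) (fun U hU => Finset.mem_range.mpr
            (Nat.lt_succ_of_le (Ecnt_le_w U hU t)))]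
        apply Finset.sum_congr rfl; intro k _
        have h3 : ∀ U ∈ P.filter (fun U => Ecnt n U t = k),
            (P.filter fun V => Ecnt n V t = Ecnt n U t).card
              = (P.filter fun V => Ecnt n V t = k).card := by
          intro U hU
          rw [(Finset.mem_filter.mp hU).2]
        trans (∑ _U ∈ P.filter (fun U => Ecnt n U t = k), (P.filter fun V => Ecnt n V t = k).card)
        · exact Finset.sum_congr rfl h3
        rw [Finset.sum_const, smul_eq_mul, pow_two]
    _ = Tsum n w := by
        rw [Tsum]
        apply Finset.sum_congr rfl; intro t ht
        apply Finset.sum_congr rfl; intro k hk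
        rw [fiber_card t k (by have := Finset.mem_range.mp ht; omega)
          (by have := Finset.mem_range.mp hk; omega)]

end Comb

/-- First moment (Eq. (10)): for `w, h ≥ 0` and `s = w + h`,
`2 · Σ_{U ∈ 𝒫} Σ_{V ∈ 𝒫} |U ∩ V| = C(2s+2, 2w+1)`, where `𝒫` is the set of
monotone lattice paths from `(0,0)` to `(w,h)`. -/
theorem first_moment_intersections (w h s : ℕ) (hs : s = w + h) :
    2 * ∑ U ∈ pathsFrom0 w h, ∑ V ∈ pathsFrom0 w h, interCount w h U V =
      Nat.choose (2 * s + 2) (2 * w + 1) := by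
  subst hs
  rw [main_sum, FMAux.Tsum_eq_Ssum, FMAux.key]
  exact FMAux.two_Rsum (w + h) w
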